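/- For every 2-form B ∈ Λ²W*, the pairing ⟨·,·⟩ is invariant under the B-field transformation ρ ↦ exp(B) ∧ ρ: for all ρ, τ ∈ Λ*W*, ⟨exp(B) ∧ ρ, exp(B) ∧ τ⟩ = ⟨ρ, τ⟩, where exp(B) = Σ_{k≥0} B^{∧k}/k! (a finite sum in Λ*W*). -/

import Mathlib

set_option synthInstance.maxHeartbeats 400000
set_option maxHeartbeats 1000000

open Module

/-- The `hat` involution on `Λ*W*`, acting on the degree-`p` component as
multiplication by `(−1)^{p(p+1)/2}`. -/
noncomputable def genHat (W : Type*) [AddCommGroup W] [Module ℝ W] :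
    ExteriorAlgebra ℝ (Module.Dual ℝ W) →ₗ[ℝ] ExteriorAlgebra ℝ (Module.Dual ℝ W) :=
  (DirectSum.toModule ℝ ℕ _ fun p =>
      ((-1 : ℝ) ^ (p * (p + 1) / 2)) • (⋀[ℝ]^p (Module.Dual ℝ W)).subtype) ∘ₗ
    (DirectSum.decomposeLinearEquiv fun i : ℕ => ⋀[ℝ]^i (Module.Dual ℝ W)).toLinearMap

/-- The pairing `⟨ρ, τ⟩`: the degree-`n` component of `ρ ∧ hat(τ)`. -/
noncomputable def genPairing (W : Type*) [AddCommGroup W] [Module ℝ W] (n : ℕ)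
    (ρ τ : ExteriorAlgebra ℝ (Module.Dual ℝ W)) : ExteriorAlgebra ℝ (Module.Dual ℝ W) :=
  GradedAlgebra.proj (fun i : ℕ => ⋀[ℝ]^i (Module.Dual ℝ W)) n (ρ * genHat W τ)

section Aux

variable {W : Type*} [AddCommGroup W] [Module ℝ W]

/-- `genHat` acts on a homogeneous element of degree `m` as the expected scalar. -/
lemma genHat_of_mem {m : ℕ} {z : ExteriorAlgebra ℝ (Module.Dual ℝ W)}
    (hz : z ∈ ⋀[ℝ]^m (Module.Dual ℝ W)) :
    genHat W z = ((-1 : ℝ) ^ (m * (m + 1) / 2)) • z := by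
  unfold genHat
  rw [LinearMap.comp_apply, LinearEquiv.coe_toLinearMap,
    DirectSum.decomposeLinearEquiv_apply,
    DirectSum.decompose_of_mem (fun i : ℕ => ⋀[ℝ]^i (Module.Dual ℝ W)) hz,
    ← DirectSum.lof_eq_of ℝ, DirectSum.toModule_lof]
  rfl

/-- Degree-two elements are central in the exterior algebra. -/
lemma commute_of_deg_two {B : ExteriorAlgebra ℝ (Module.Dual ℝ W)}
    (hB : B ∈ ⋀[ℝ]^2 (Module.Dual ℝ W)) : ∀ x : ExteriorAlgebra ℝ (Module.Dual ℝ W),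
    Commute B x := by
  have hB2 : B ∈ LinearMap.range (ExteriorAlgebra.ι ℝ : Module.Dual ℝ W →ₗ[ℝ] _) *
      LinearMap.range (ExteriorAlgebra.ι ℝ) := by
    rw [← pow_two]; exact hB
  refine Submodule.mul_induction_on (C := fun y => ∀ x, Commute y x) hB2 ?_ ?_
  · rintro a ⟨u, rfl⟩ b ⟨v, rfl⟩ x
    have h : ∀ a b : Module.Dual ℝ W,
        ExteriorAlgebra.ι ℝ a * ExteriorAlgebra.ι ℝ b =
          -(ExteriorAlgebra.ι ℝ b * ExteriorAlgebra.ι ℝ a) := fun a b =>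
      eq_neg_of_add_eq_zero_left (ExteriorAlgebra.ι_add_mul_swap a b)
    induction x using ExteriorAlgebra.induction with
    | algebraMap r => exact (Algebra.commutes r _).symm
    | ι w =>
      show _ = _
      rw [mul_assoc, h v w, mul_neg, ← mul_assoc, h u w, neg_mul, neg_neg, mul_assoc]
    | mul a b hha hhb => exact hha.mul_right hhb
    | add a b hha hhb => exact hha.add_right hhb
  · intro a b hha hhb x
    exact (hha x).add_left (hhb x)

/-- Homogeneous elements of degree greater than the dimension vanish. -/
lemma zero_of_high_degree [FiniteDimensional ℝ W] {n : ℕ} (hn : Module.finrank ℝ W = n)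
    {m : ℕ} (hm : n < m) {z : ExteriorAlgebra ℝ (Module.Dual ℝ W)}
    (hz : z ∈ ⋀[ℝ]^m (Module.Dual ℝ W)) : z = 0 := by
  have hbot : (⋀[ℝ]^m (Module.Dual ℝ W)) = ⊥ := by
    rw [← ExteriorAlgebra.ιMulti_span_fixedDegree, Submodule.span_eq_bot]
    rintro x ⟨v, rfl⟩
    refine AlternatingMap.map_linearDependent _ v fun hlin => ?_
    have hcard := hlin.fintype_card_le_finrank
    rw [Fintype.card_fin, Subspace.dual_finrank_eq, hn] at hcard
    omega
  simpa [hbot] using hz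

lemma sign_eq (k q : ℕ) :
    ((-1 : ℝ)) ^ ((k * 2 + q) * (k * 2 + q + 1) / 2) =
      (-1 : ℝ) ^ k * (-1 : ℝ) ^ (q * (q + 1) / 2) := by
  obtain ⟨t, ht⟩ := Nat.even_mul_succ_self q
  have ht' : (q : ℤ) * (q + 1) = t + t := by exact_mod_cast ht
  have h1 : q * (q + 1) / 2 = t := by omega
  have h2 : (k * 2 + q) * (k * 2 + q + 1) = 2 * (2 * (k * k + k * q) + (k + t)) := by
    zify
    linear_combination ht'
  rw [h2, Nat.mul_div_cancel_left _ (by norm_num : 0 < 2), pow_add, pow_mul,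
    neg_one_sq, one_pow, one_mul, pow_add, h1]

lemma genHat_pow_mul {B : ExteriorAlgebra ℝ (Module.Dual ℝ W)}
    (hB : B ∈ ⋀[ℝ]^2 (Module.Dual ℝ W)) (k : ℕ) (τ : ExteriorAlgebra ℝ (Module.Dual ℝ W)) :
    genHat W (B ^ k * τ) = ((-1 : ℝ) ^ k) • (B ^ k * genHat W τ) := by
  induction τ using DirectSum.Decomposition.inductionOn
    (ℳ := fun i : ℕ => ⋀[ℝ]^i (Module.Dual ℝ W)) with
  | zero => simp
  | homogeneous z =>
    rename_i q
    have hBk : B ^ k ∈ ⋀[ℝ]^(k * 2) (Module.Dual ℝ W) := by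
      simpa [smul_eq_mul] using SetLike.pow_mem_graded k hB
    have hmul : B ^ k * (z : ExteriorAlgebra ℝ (Module.Dual ℝ W)) ∈
        ⋀[ℝ]^(k * 2 + q) (Module.Dual ℝ W) := SetLike.mul_mem_graded hBk z.2
    rw [genHat_of_mem hmul, genHat_of_mem z.2, mul_smul_comm, smul_smul, sign_eq]
  | add a b ha hb =>
    rw [mul_add, map_add, ha, hb, map_add, mul_add, smul_add]

end Aux

/-- The pairing `⟨·,·⟩` is invariant under `B`-field transformations:
for every 2-form `B ∈ Λ²W*`, and all `ρ, τ`, `⟨exp(B) ∧ ρ, exp(B) ∧ τ⟩ = ⟨ρ, τ⟩`, where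
`exp(B) = Σ_k B^{∧k}/k!` (the sum is finite: `B^{∧k} = 0` for `2k > n`, so the terms
with `k ≤ n` already exhaust it). -/
theorem genPairing_B_field_invariant (n : ℕ) (W : Type*) [AddCommGroup W] [Module ℝ W]
    [FiniteDimensional ℝ W] (hn : Module.finrank ℝ W = n)
    (B : ExteriorAlgebra ℝ (Module.Dual ℝ W)) (hB : B ∈ ⋀[ℝ]^2 (Module.Dual ℝ W))
    (ρ τ : ExteriorAlgebra ℝ (Module.Dual ℝ W)) :
    genPairing W n ((∑ k ∈ Finset.range (n + 1), ((k.factorial : ℝ))⁻¹ • B ^ k) * ρ)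
        ((∑ k ∈ Finset.range (n + 1), ((k.factorial : ℝ))⁻¹ • B ^ k) * τ) =
      genPairing W n ρ τ := by
  set E : ExteriorAlgebra ℝ (Module.Dual ℝ W) :=
    ∑ k ∈ Finset.range (n + 1), ((k.factorial : ℝ))⁻¹ • B ^ k with hE
  set E' : ExteriorAlgebra ℝ (Module.Dual ℝ W) :=
    ∑ k ∈ Finset.range (n + 1), ((-1 : ℝ) ^ k * ((k.factorial : ℝ))⁻¹) • B ^ k with hE'
  -- B^m = 0 for m > n
  have hBpow : ∀ m : ℕ, n < m → B ^ m = 0 := by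
    intro m hm
    have hBm : B ^ m ∈ ⋀[ℝ]^(m * 2) (Module.Dual ℝ W) := by
      simpa [smul_eq_mul] using SetLike.pow_mem_graded m hB
    exact zero_of_high_degree hn (by omega) hBm
  -- hat of E * τ
  have hhat : genHat W (E * τ) = E' * genHat W τ := by
    rw [hE, hE', Finset.sum_mul, Finset.sum_mul, map_sum]
    refine Finset.sum_congr rfl fun k _ => ?_
    rw [smul_mul_assoc, map_smul, genHat_pow_mul hB, smul_smul, smul_mul_assoc, mul_comm]
  -- E * E' = 1
  have hEE' : E * E' = 1 := by
    rw [hE, hE', Finset.sum_mul_sum]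
    have step1 : ∀ i ∈ Finset.range (n + 1), ∀ j ∈ Finset.range (n + 1),
        (((i.factorial : ℝ))⁻¹ • B ^ i) * (((-1 : ℝ) ^ j * ((j.factorial : ℝ))⁻¹) • B ^ j)
          = ((((i.factorial : ℝ))⁻¹ * ((-1 : ℝ) ^ j * ((j.factorial : ℝ))⁻¹)) • B ^ (i + j)) := by
      intro i _ j _
      rw [smul_mul_smul_comm, pow_add]
    rw [Finset.sum_congr rfl fun i hi => Finset.sum_congr rfl fun j hj => step1 i hi j hj,
      ← Finset.sum_product']
    set f : ℕ × ℕ → ExteriorAlgebra ℝ (Module.Dual ℝ W) := fun p =>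
      ((((p.1.factorial : ℝ))⁻¹ * ((-1 : ℝ) ^ p.2 * ((p.2.factorial : ℝ))⁻¹)) • B ^ (p.1 + p.2))
      with hf
    have hsub : ((Finset.range (n + 1)).biUnion Finset.HasAntidiagonal.antidiagonal) ⊆
        Finset.range (n + 1) ×ˢ Finset.range (n + 1) := by
      intro p hp
      simp only [Finset.mem_biUnion, Finset.mem_range, Finset.HasAntidiagonal.mem_antidiagonal] at hp
      obtain ⟨m, hm, hpm⟩ := hp
      simp only [Finset.mem_product, Finset.mem_range]
      omega
    have hvanish : ∀ p ∈ Finset.range (n + 1) ×ˢ Finset.range (n + 1),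
        p ∉ (Finset.range (n + 1)).biUnion Finset.HasAntidiagonal.antidiagonal → f p = 0 := by
      intro p _ hnp
      have hgt : n < p.1 + p.2 := by
        by_contra hc
        push_neg at hc
        exact hnp (Finset.mem_biUnion.mpr ⟨p.1 + p.2, Finset.mem_range.mpr (by omega),
          Finset.HasAntidiagonal.mem_antidiagonal.mpr rfl⟩)
      rw [hf]
      simp only
      rw [hBpow _ hgt, smul_zero]
    have hdisj : ∀ a ∈ (Finset.range (n + 1) : Finset ℕ), ∀ b ∈ (Finset.range (n + 1) : Finset ℕ),
        a ≠ b → Disjoint (Finset.HasAntidiagonal.antidiagonal a) (Finset.HasAntidiagonal.antidiagonal b) := by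
      intro a _ b _ hab
      simp only [Finset.disjoint_left, Finset.HasAntidiagonal.mem_antidiagonal]
      intro p hpa hpb
      exact hab (hpa.symm.trans hpb)
    rw [← Finset.sum_subset hsub hvanish, Finset.sum_biUnion hdisj]
    have hinner : ∀ m ∈ Finset.range (n + 1),
        (∑ p ∈ Finset.HasAntidiagonal.antidiagonal m, f p) = (if m = 0 then (1 : ℝ) else 0) • B ^ m := by
      intro m _
      have hcongr : ∀ p ∈ Finset.HasAntidiagonal.antidiagonal m,
          f p = ((((p.1.factorial : ℝ))⁻¹ * ((-1 : ℝ) ^ p.2 * ((p.2.factorial : ℝ))⁻¹)) • B ^ m) := by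
        intro p hp
        rw [hf]
        simp only
        rw [Finset.HasAntidiagonal.mem_antidiagonal.mp hp]
      rw [Finset.sum_congr rfl hcongr, ← Finset.sum_smul]
      congr 1
      -- the scalar identity, via power series
      have hps := congrArg (PowerSeries.coeff (R := ℝ) m)
        (PowerSeries.exp_mul_exp_neg_eq_one (A := ℝ))
      rw [PowerSeries.coeff_mul, PowerSeries.coeff_one] at hps
      rw [← hps]
      refine Finset.sum_congr rfl fun p _ => ?_
      rw [PowerSeries.evalNegHom, PowerSeries.coeff_rescale, PowerSeries.coeff_exp,
        PowerSeries.coeff_exp]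
      push_cast
      ring
    rw [Finset.sum_congr rfl hinner, Finset.sum_eq_single 0]
    · simp
    · intro m _ hm
      simp [hm]
    · intro h
      exact absurd (Finset.mem_range.mpr (Nat.succ_pos n)) h
  -- E' commutes with ρ
  have hcomm : ρ * E' = E' * ρ := by
    rw [hE']
    exact (Commute.sum_left _ _ _ fun k _ =>
      ((commute_of_deg_two hB ρ).pow_left k).smul_left _).symm
  -- put it all together
  unfold genPairing
  rw [hhat, mul_assoc, ← mul_assoc ρ E', hcomm, mul_assoc E', ← mul_assoc, hEE', one_mul]
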